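/- Let P be a right A-comodule algebra. Equip P ⊗ P with the tensor product coaction Δ_R^⊗(u ⊗ v) = u⁽¹⁾ ⊗ v⁽¹⁾ ⊗ u⁽²⁾v⁽²⁾ and P ⊗ A with the coaction Δ_R^{Ad}(u ⊗ a) = u⁽¹⁾ ⊗ a₂ ⊗ u⁽²⁾ S(a₁) a₃ (using the right adjoint coaction Ad(a) = a₂ ⊗ S(a₁)a₃ on A). Then (χ ⊗ id) ∘ Δ_R^⊗ = Δ_R^{Ad} ∘ χ. -/

import Mathlib

open TensorProduct

noncomputable section

variable (k : Type*) [Field k]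

/-- Convolution product of linear maps from a coalgebra to an algebra:
`(f * g)(a) = f(a₁) g(a₂)`. -/
def conv {C B : Type*} [AddCommMonoid C] [Module k C] [Coalgebra k C]
    [Semiring B] [Algebra k B] (f g : C →ₗ[k] B) : C →ₗ[k] B :=
  LinearMap.mul' k B ∘ₗ TensorProduct.map f g ∘ₗ Coalgebra.comul

/-- The convolution unit `a ↦ ε(a) 1`. -/
def convOne {C B : Type*} [AddCommMonoid C] [Module k C] [Coalgebra k C]
    [Semiring B] [Algebra k B] : C →ₗ[k] B :=
  Algebra.linearMap k B ∘ₗ Coalgebra.counit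

variable (A P : Type*) [Ring A] [HopfAlgebra k A] [Ring P] [Algebra k P]

/-- The canonical map `χ : P ⊗ P → P ⊗ A`, `u ⊗ v ↦ u v⁽¹⁾ ⊗ v⁽²⁾`,
i.e. `χ = (mult ⊗ id) ∘ (id ⊗ Δ_R)`. -/
def chiMap (ΔR : P →ₗ[k] P ⊗[k] A) : P ⊗[k] P →ₗ[k] P ⊗[k] A :=
  TensorProduct.map (LinearMap.mul' k P) LinearMap.id ∘ₗ
    (TensorProduct.assoc k P P A).symm.toLinearMap ∘ₗ
    TensorProduct.map LinearMap.id ΔR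

/-- The right adjoint coaction `Ad(a) = a₂ ⊗ S(a₁)a₃`. -/
def adCoaction : A →ₗ[k] A ⊗[k] A :=
  TensorProduct.map LinearMap.id (LinearMap.mul' k A) ∘ₗ
    (TensorProduct.leftComm k A A A).toLinearMap ∘ₗ
    TensorProduct.map (HopfAlgebra.antipode (R := k)) LinearMap.id ∘ₗ
    TensorProduct.map LinearMap.id Coalgebra.comul ∘ₗ Coalgebra.comul

/-- The kernel of `P ⊗ P → P ⊗_B P`: the span of elements `u b ⊗ v - u ⊗ b v`
with `b` a coinvariant (`Δ_R b = b ⊗ 1`), so that `P ⊗_B P = (P ⊗ P) ⧸ relSub`. -/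
def relSub (ΔR : P →ₗ[k] P ⊗[k] A) : Submodule k (P ⊗[k] P) :=
  Submodule.span k {x | ∃ u v b : P, ΔR b = b ⊗ₜ 1 ∧ x = (u * b) ⊗ₜ v - u ⊗ₜ (b * v)}

/-- The image of `B ⊗ B` in `P ⊗ P`, where `B = Pᴬ` is the coinvariant subalgebra. -/
def BBsub (ΔR : P →ₗ[k] P ⊗[k] A) : Submodule k (P ⊗[k] P) :=
  Submodule.span k {x | ∃ b c : P, ΔR b = b ⊗ₜ 1 ∧ ΔR c = c ⊗ₜ 1 ∧ x = b ⊗ₜ c}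

/-- The submodule `P B² P ⊆ P ⊗ P`, where `B² = ker(mult : B ⊗ B → B)`. -/
def PB2P (ΔR : P →ₗ[k] P ⊗[k] A) : Submodule k (P ⊗[k] P) :=
  Submodule.span k {w | ∃ u v : P, ∃ x ∈ BBsub k A P ΔR ⊓ LinearMap.ker (LinearMap.mul' k P),
    w = TensorProduct.map (LinearMap.mulLeft k u) (LinearMap.mulRight k v) x}

/-- The tensor product coaction `Δ_R^⊗` on `P ⊗ P`: `u ⊗ v ↦ u⁽¹⁾ ⊗ v⁽¹⁾ ⊗ u⁽²⁾v⁽²⁾`. -/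
def deltaTens (ΔR : P →ₗ[k] P ⊗[k] A) : P ⊗[k] P →ₗ[k] (P ⊗[k] P) ⊗[k] A :=
  TensorProduct.map LinearMap.id (LinearMap.mul' k A) ∘ₗ
    (TensorProduct.tensorTensorTensorComm k P A P A).toLinearMap ∘ₗ
    TensorProduct.map ΔR ΔR

/-- The coaction `Δ_R^{Ad}` on `P ⊗ A`: `u ⊗ a ↦ u⁽¹⁾ ⊗ a₂ ⊗ u⁽²⁾ S(a₁) a₃`. -/
def deltaAd (ΔR : P →ₗ[k] P ⊗[k] A) : P ⊗[k] A →ₗ[k] (P ⊗[k] A) ⊗[k] A :=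
  TensorProduct.map LinearMap.id (LinearMap.mul' k A) ∘ₗ
    (TensorProduct.tensorTensorTensorComm k P A A A).toLinearMap ∘ₗ
    TensorProduct.map ΔR (adCoaction k A)

section Aux

open Coalgebra HopfAlgebra

variable {k A}
set_option linter.unusedSectionVars false

lemma sum_counit_smul {b : A} {ι : Type*} (r : Coalgebra.Repr k b ι) :
    ∑ i ∈ r.index, Coalgebra.counit (R := k) (r.left i) • r.right i = b := by
  have h := congrArg (TensorProduct.lid k A) (Coalgebra.sum_counit_tmul_eq (R := k) r)
  simpa only [map_sum, TensorProduct.lid_tmul, one_smul] using h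

variable (k A) in
/-- `c ⊗ d ↦ ∑ d₁ ⊗ (S c) d₂`. -/
def uMini : A ⊗[k] A →ₗ[k] A ⊗[k] A :=
  TensorProduct.map LinearMap.id (LinearMap.mul' k A) ∘ₗ
    (TensorProduct.leftComm k A A A).toLinearMap ∘ₗ
    TensorProduct.map (HopfAlgebra.antipode (R := k)) Coalgebra.comul

lemma adCoaction_eq : adCoaction k A = uMini k A ∘ₗ Coalgebra.comul := by
  ext b
  simp only [adCoaction, uMini, LinearMap.comp_apply]
  congr 1
  congr 1
  induction (Coalgebra.comul (R := k) b) using TensorProduct.induction_on with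
  | zero => simp
  | tmul c d => simp
  | add x y hx hy => simp [hx, hy]

lemma uMini_tmul (c d : A) {ι : Type*} (s : Coalgebra.Repr k d ι) :
    uMini k A (c ⊗ₜ d) =
      ∑ l ∈ s.index, s.left l ⊗ₜ[k] (HopfAlgebra.antipode (R := k) c * s.right l) := by
  simp only [uMini, LinearMap.comp_apply, TensorProduct.map_tmul, LinearMap.id_coe, id_eq]
  rw [← s.eq]
  simp [TensorProduct.tmul_sum, map_sum]

variable (k A) in
/-- `c ⊗ d ↦ ∑ d₂ ⊗ c S(d₁) d₃` (i.e. `id ⊗ mult` after `leftComm` after `id ⊗ Ad`). -/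
def uPrime : A ⊗[k] A →ₗ[k] A ⊗[k] A :=
  TensorProduct.map LinearMap.id (LinearMap.mul' k A) ∘ₗ
    (TensorProduct.leftComm k A A A).toLinearMap ∘ₗ
    LinearMap.lTensor A (adCoaction k A)

variable (k A) in
/-- `x ⊗ (c ⊗ d) ↦ ∑ d₁ ⊗ x S(c) d₂`. -/
def psiMap : A ⊗[k] (A ⊗[k] A) →ₗ[k] A ⊗[k] A :=
  TensorProduct.map LinearMap.id (LinearMap.mul' k A) ∘ₗ
    (TensorProduct.leftComm k A A A).toLinearMap ∘ₗ
    LinearMap.lTensor A (uMini k A)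

lemma keyA (b : A) : uPrime k A (Coalgebra.comul b) = Coalgebra.comul b := by
  set r : Coalgebra.Repr k b (A × A) := Coalgebra.Repr.arbitrary k b with hr
  set r1 : ∀ i : A × A, Coalgebra.Repr k (r.left i) (A × A) :=
    fun i => Coalgebra.Repr.arbitrary k (r.left i) with hr1
  set r2 : ∀ i : A × A, Coalgebra.Repr k (r.right i) (A × A) :=
    fun i => Coalgebra.Repr.arbitrary k (r.right i) with hr2
  have K1 : uPrime k A (Coalgebra.comul b)
      = psiMap k A (∑ i ∈ r.index, ∑ j ∈ (r2 i).index,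
          r.left i ⊗ₜ[k] ((r2 i).left j ⊗ₜ[k] (r2 i).right j)) := by
    rw [← r.eq]
    simp only [map_sum]
    refine Finset.sum_congr rfl fun i _ => ?_
    simp only [uPrime, psiMap, LinearMap.comp_apply, LinearMap.lTensor_tmul, adCoaction_eq]
    rw [← (r2 i).eq]
    simp only [map_sum, TensorProduct.tmul_sum]
  have K2 := congrArg (psiMap k A) (Coalgebra.sum_tmul_tmul_eq r r1 r2)
  have expand : ∀ (i : A × A) (x c : A),
      psiMap k A (x ⊗ₜ[k] (c ⊗ₜ[k] r.right i))
        = ∑ l ∈ (r2 i).index, (r2 i).left l ⊗ₜ[k]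
            (x * (HopfAlgebra.antipode (R := k) c * (r2 i).right l)) := by
    intro i x c
    simp only [psiMap, LinearMap.comp_apply, LinearMap.lTensor_tmul,
      uMini_tmul c (r.right i) (r2 i)]
    simp [TensorProduct.tmul_sum, map_sum]
  have K3 : psiMap k A (∑ i ∈ r.index, ∑ j ∈ (r1 i).index,
      (r1 i).left j ⊗ₜ[k] ((r1 i).right j ⊗ₜ[k] r.right i)) = Coalgebra.comul b := by
    simp only [map_sum, expand]
    have K3i : ∀ i ∈ r.index, ∑ j ∈ (r1 i).index, ∑ l ∈ (r2 i).index,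
        (r2 i).left l ⊗ₜ[k] ((r1 i).left j *
          (HopfAlgebra.antipode (R := k) ((r1 i).right j) * (r2 i).right l))
        = Coalgebra.counit (R := k) (r.left i) • Coalgebra.comul (r.right i) := by
      intro i _
      rw [Finset.sum_comm, ← (r2 i).eq, Finset.smul_sum]
      refine Finset.sum_congr rfl fun l _ => ?_
      rw [← TensorProduct.tmul_sum]
      simp only [← mul_assoc]
      rw [← Finset.sum_mul, HopfAlgebra.sum_mul_antipode_eq_algebraMap_counit (r1 i), ← Algebra.smul_def,
        TensorProduct.tmul_smul]
    rw [Finset.sum_congr rfl K3i]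
    simp only [← map_smul, ← map_sum]
    rw [_root_.sum_counit_smul r]
  rw [K1, ← K2, K3]

end Aux
set_option maxHeartbeats 1000000
set_option synthInstance.maxHeartbeats 1000000

/-- `X ⊗ (W ⊗ (y₁ ⊗ y₂)) ↦ ((X W)¹ ⊗ y₁) ⊗ (X W)² y₂` where `X W` is the product in `P ⊗ A`. -/
def thetaMap : (P ⊗[k] A) ⊗[k] ((P ⊗[k] A) ⊗[k] (A ⊗[k] A)) →ₗ[k] (P ⊗[k] A) ⊗[k] A :=
  TensorProduct.map LinearMap.id (LinearMap.mul' k A) ∘ₗ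
    (TensorProduct.tensorTensorTensorComm k P A A A).toLinearMap ∘ₗ
    TensorProduct.map (LinearMap.mul' k (P ⊗[k] A)) LinearMap.id ∘ₗ
    (TensorProduct.assoc k (P ⊗[k] A) (P ⊗[k] A) (A ⊗[k] A)).symm.toLinearMap

/-- `(r ⊗ e) ⊗ c ↦ (r ⊗ c) ⊗ (e ⊗ 1)`. -/
def tauMap : (P ⊗[k] A) ⊗[k] A →ₗ[k] (P ⊗[k] A) ⊗[k] (A ⊗[k] A) :=
  (TensorProduct.tensorTensorTensorComm k P A A A).toLinearMap ∘ₗ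
    LinearMap.lTensor (P ⊗[k] A) ((TensorProduct.mk k A A).flip 1)

/-- Lemma 3.3(3): `(χ ⊗ id) ∘ Δ_R^⊗ = Δ_R^{Ad} ∘ χ`. -/
theorem chi_equivariant_adjoint
    (ΔR : P →ₗ[k] P ⊗[k] A)
    (hcounit : ∀ u : P, TensorProduct.map LinearMap.id Coalgebra.counit (ΔR u) = u ⊗ₜ (1 : k))
    (hcoassoc : ∀ u : P, TensorProduct.map ΔR LinearMap.id (ΔR u)
      = (TensorProduct.assoc k P A A).symm (TensorProduct.map LinearMap.id Coalgebra.comul (ΔR u)))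
    (hone : ΔR 1 = 1)
    (hmul : ∀ u v : P, ΔR (u * v) = ΔR u * ΔR v) :
    TensorProduct.map (chiMap k A P ΔR) LinearMap.id ∘ₗ deltaTens k A P ΔR
      = deltaAd k A P ΔR ∘ₗ chiMap k A P ΔR := by
  apply TensorProduct.ext'
  intro u v
  simp only [LinearMap.comp_apply]
  have S1 : TensorProduct.map (chiMap k A P ΔR) LinearMap.id (deltaTens k A P ΔR (u ⊗ₜ v))
      = thetaMap k A P (ΔR u ⊗ₜ tauMap k A P (TensorProduct.map ΔR LinearMap.id (ΔR v))) := by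
    simp only [deltaTens, LinearMap.comp_apply, LinearEquiv.coe_coe, TensorProduct.map_tmul,
      LinearMap.id_coe, id_eq]
    generalize ΔR v = x
    induction x using TensorProduct.induction_on with
    | zero => simp
    | add x y hx hy => simp only [map_add, TensorProduct.tmul_add, hx, hy]
    | tmul q1 q2 =>
      induction ΔR u using TensorProduct.induction_on with
      | zero => simp
      | add X Y hX hY => simp only [map_add, TensorProduct.tmul_add, TensorProduct.add_tmul,
          hX, hY]
      | tmul p1 p2 =>
        simp only [TensorProduct.tensorTensorTensorComm_tmul, TensorProduct.map_tmul,
          LinearMap.mul'_apply, LinearMap.id_coe, id_eq, chiMap, LinearMap.comp_apply,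
          LinearEquiv.coe_coe, TensorProduct.assoc_symm_tmul]
        induction ΔR q1 using TensorProduct.induction_on with
        | zero => simp
        | add w w' hw hw' => simp only [map_add, TensorProduct.tmul_add,
            TensorProduct.add_tmul, hw, hw']
        | tmul r e =>
          simp [thetaMap, tauMap, TensorProduct.assoc_symm_tmul,
            TensorProduct.tensorTensorTensorComm_tmul, LinearMap.mul'_apply,
            Algebra.TensorProduct.tmul_mul_tmul]
  have S2 : deltaAd k A P ΔR (chiMap k A P ΔR (u ⊗ₜ v))
      = thetaMap k A P (ΔR u ⊗ₜ (LinearMap.lTensor (P ⊗[k] A) (adCoaction k A))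
          (TensorProduct.map ΔR LinearMap.id (ΔR v))) := by
    simp only [chiMap, LinearMap.comp_apply, LinearEquiv.coe_coe, TensorProduct.map_tmul,
      LinearMap.id_coe, id_eq]
    generalize ΔR v = x
    induction x using TensorProduct.induction_on with
    | zero => simp
    | add x y hx hy => simp only [map_add, TensorProduct.tmul_add, hx, hy]
    | tmul q1 q2 =>
      simp only [TensorProduct.assoc_symm_tmul, TensorProduct.map_tmul, LinearMap.mul'_apply,
        LinearMap.id_coe, id_eq, LinearMap.lTensor_tmul]
      simp only [deltaAd, LinearMap.comp_apply, LinearEquiv.coe_coe, TensorProduct.map_tmul,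
        LinearMap.id_coe, id_eq]
      rw [hmul]
      simp only [thetaMap, LinearMap.comp_apply, LinearEquiv.coe_coe,
        TensorProduct.map_tmul, LinearMap.id_coe, id_eq, TensorProduct.assoc_symm_tmul,
        LinearMap.mul'_apply]
  rw [S1, S2, hcoassoc v]
  obtain ⟨t, ht⟩ := TensorProduct.exists_finset (R := k) (ΔR v)
  rw [ht]
  simp only [map_sum, TensorProduct.map_tmul, LinearMap.id_coe, id_eq, TensorProduct.tmul_sum]
  have core : ∀ (X : P ⊗[k] A) (q1 : P) (y : A ⊗[k] A),
      thetaMap k A P (X ⊗ₜ (LinearMap.lTensor (P ⊗[k] A) (adCoaction k A))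
          ((TensorProduct.assoc k P A A).symm (q1 ⊗ₜ y)))
        = thetaMap k A P (X ⊗ₜ tauMap k A P
            ((TensorProduct.assoc k P A A).symm (q1 ⊗ₜ uPrime k A y))) := by
    intro X q1 y
    induction y using TensorProduct.induction_on with
    | zero => simp
    | add y y' hy hy' => simp only [map_add, TensorProduct.tmul_add, hy, hy']
    | tmul c d =>
      simp only [TensorProduct.assoc_symm_tmul, LinearMap.lTensor_tmul, uPrime,
        LinearMap.comp_apply, LinearEquiv.coe_coe]
      generalize adCoaction k A d = z
      induction z using TensorProduct.induction_on with
      | zero => simp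
      | add z z' hz hz' => simp only [map_add, TensorProduct.tmul_add, hz, hz']
      | tmul e f =>
        induction X using TensorProduct.induction_on with
        | zero => simp
        | add X Y hX hY => simp only [TensorProduct.add_tmul, map_add, hX, hY]
        | tmul p1 p2 =>
          simp [thetaMap, tauMap, TensorProduct.assoc_symm_tmul, TensorProduct.leftComm_tmul,
            TensorProduct.tensorTensorTensorComm_tmul, LinearMap.mul'_apply,
            Algebra.TensorProduct.tmul_mul_tmul, mul_assoc]
  refine Finset.sum_congr rfl fun q _ => ?_
  rw [core (ΔR u) q.1 (Coalgebra.comul q.2), keyA]
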